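/- Let n ≥ 5, let H be a Hamiltonian cycle of the complete graph K_n, and let {u,v} be a non-edge of H (a chord). The edge {u,v} divides H into two edge-disjoint u–v paths H_1 and H_2; choose an edge {u,u'} of H_1 incident to u and an edge {v,v'} of H_2 incident to v. Then the edge set (H − {u,u'} − {v,v'}) + {u,v} + {u',v'} is again a Hamiltonian cycle of K_n. -/

import Mathlib

open SimpleGraph
open scoped Classical

private lemma aux_mem_edge_of_mem_support {V : Type*} {G : SimpleGraph V} {u v : V}
    (w : G.Walk u v) {x : V} (hx : x ∈ w.support) :
    x = u ∨ ∃ e ∈ w.edges, x ∈ e := by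
  induction w with
  | nil => simp at hx; exact Or.inl hx
  | @cons a b c h t ih =>
    rw [SimpleGraph.Walk.support_cons, List.mem_cons] at hx
    rcases hx with rfl | hx
    · exact Or.inl rfl
    · rcases ih hx with rfl | ⟨e, he, hxe⟩
      · exact Or.inr ⟨s(a, x), by simp, by simp⟩
      · exact Or.inr ⟨e, by simp [he], hxe⟩

private lemma aux_mem_sup {V : Type*} {G : SimpleGraph V} {u v : V} (w : G.Walk u v)
    {e : Sym2 V} {x : V} (he : e ∈ w.edges) (hx : x ∈ e) : x ∈ w.support := by
  induction e with
  | h y z =>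
    rcases Sym2.mem_iff.mp hx with rfl | rfl
    · exact w.fst_mem_support_of_mem_edges he
    · exact w.snd_mem_support_of_mem_edges he

private lemma aux_head {V : Type*} {G : SimpleGraph V} {u v x : V} (w : G.Walk u v)
    (hw : w.IsPath) (h : s(u, x) ∈ w.edges) :
    ∃ (h' : G.Adj u x) (t : G.Walk x v), w = SimpleGraph.Walk.cons h' t := by
  cases w with
  | nil => simp at h
  | @cons _ b _ h' t =>
    rw [SimpleGraph.Walk.edges_cons, List.mem_cons] at h
    rcases h with h | h
    · obtain rfl : x = b := Sym2.congr_right.mp h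
      exact ⟨h', t, rfl⟩
    · exact absurd (t.fst_mem_support_of_mem_edges h)
        ((SimpleGraph.Walk.cons_isPath_iff h' t).mp hw).2

private lemma aux_sum_count {α : Type*} [Fintype α] [DecidableEq α] (l : List α) :
    ∑ x, l.count x = l.length := by
  induction l with
  | nil => simp
  | cons a l ih =>
    have : ∀ x, (a :: l).count x = l.count x + if x = a then 1 else 0 := by
      intro x
      rcases eq_or_ne x a with rfl | h
      · simp
      · simp [List.count_cons_of_ne (Ne.symm h), h]
    simp only [this]
    rw [Finset.sum_add_distrib, ih, Finset.sum_ite_eq' Finset.univ a (fun _ => 1)]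
    simp

theorem stmt_12 (n : ℕ) (hn : 5 ≤ n) (a : Fin n)
    (p : (⊤ : SimpleGraph (Fin n)).Walk a a) (hp : p.IsHamiltonianCycle)
    (u v u' v' : Fin n) (huv : u ≠ v) (hchord : s(u, v) ∉ p.edges)
    (H1 H2 : (⊤ : SimpleGraph (Fin n)).Walk u v)
    (hH1 : H1.IsPath) (hH2 : H2.IsPath)
    (hdisj : ∀ e, e ∈ H1.edges → e ∉ H2.edges)
    (hunion : ∀ e, e ∈ p.edges ↔ e ∈ H1.edges ∨ e ∈ H2.edges)
    (h1 : s(u, u') ∈ H1.edges) (h2 : s(v, v') ∈ H2.edges) :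
    ∃ (b : Fin n) (q : (⊤ : SimpleGraph (Fin n)).Walk b b),
      q.IsHamiltonianCycle ∧
      ∀ e, e ∈ q.edges ↔
        ((e ∈ p.edges ∧ e ≠ s(u, u') ∧ e ≠ s(v, v')) ∨ e = s(u, v) ∨ e = s(u', v')) := by
  classical
  have hadj_uu' : (⊤ : SimpleGraph (Fin n)).Adj u u' := H1.adj_of_mem_edges h1
  have hadj_vv' : (⊤ : SimpleGraph (Fin n)).Adj v v' := H2.adj_of_mem_edges h2
  have huu' : u ≠ u' := hadj_uu'.ne
  have hvv' : v ≠ v' := hadj_vv'.ne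
  have hu'v : u' ≠ v := by
    rintro rfl; exact hchord ((hunion _).mpr (Or.inl h1))
  have hv'u : v' ≠ u := by
    rintro rfl
    exact hchord ((hunion _).mpr (Or.inr (by rwa [Sym2.eq_swap] at h2)))
  -- lengths
  have hplen : p.length = n := by simpa using hp.length_eq
  have hnodup1 : H1.edges.Nodup := hH1.isTrail.edges_nodup
  have hnodup2 : H2.edges.Nodup := hH2.isTrail.edges_nodup
  have hperm : p.edges.Perm (H1.edges ++ H2.edges) := by
    refine (List.perm_ext_iff_of_nodup hp.isCycle.isCircuit.isTrail.edges_nodup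
      (List.Nodup.append hnodup1 hnodup2 hdisj)).mpr ?_
    intro e; rw [List.mem_append]; exact hunion e
  have hlen : H1.length + H2.length = n := by
    have h := hperm.length_eq
    rw [List.length_append, SimpleGraph.Walk.length_edges, SimpleGraph.Walk.length_edges,
      SimpleGraph.Walk.length_edges, hplen] at h
    omega
  -- coverage
  have hcover : ∀ x : Fin n, x ∈ H1.support ∨ x ∈ H2.support := by
    intro x
    have hxp : x ∈ p.support := hp.mem_support x
    have hedge : ∃ e ∈ p.edges, x ∈ e := by
      rcases aux_mem_edge_of_mem_support p hxp with rfl | h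
      · have hnn : ¬ p.Nil := by
          rw [SimpleGraph.Walk.nil_iff_length_eq, hplen]; omega
        rcases SimpleGraph.Walk.not_nil_iff.mp hnn with ⟨b, hadj, q, rfl⟩
        exact ⟨s(x, b), by simp, by simp⟩
      · exact h
    obtain ⟨e, he, hxe⟩ := hedge
    rcases (hunion e).mp he with h | h
    · exact Or.inl (aux_mem_sup H1 h hxe)
    · exact Or.inr (aux_mem_sup H2 h hxe)
  -- counting
  have hcnt : ∀ (l : List (Fin n)) (x : Fin n), x ∈ l → 1 ≤ l.count x := by
    intro l x hx; exact List.count_pos_iff.mpr hx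
  have hkey : ∀ x : Fin n,
      H1.support.count x + H2.support.count x
        = 1 + (if x = u then 1 else 0) + (if x = v then 1 else 0) := by
    have hlow : ∀ x ∈ Finset.univ,
        1 + (if x = u then 1 else 0) + (if x = v then 1 else 0)
          ≤ H1.support.count x + H2.support.count x := by
      intro x _
      by_cases hxu : x = u
      · subst hxu
        have a1 := hcnt _ x H1.start_mem_support
        have a2 := hcnt _ x H2.start_mem_support
        simp only [if_neg huv, if_pos rfl]
        simp
        omega
      by_cases hxv : x = v
      · subst hxv
        have a1 := hcnt _ x H1.end_mem_support
        have a2 := hcnt _ x H2.end_mem_support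
        simp only [if_neg hxu, if_pos rfl]
        simp
        omega
      · simp only [if_neg hxu, if_neg hxv]
        rcases hcover x with h | h
        · have := hcnt _ x h; omega
        · have := hcnt _ x h; omega
    have hsum : ∑ x : Fin n,
        (1 + (if x = u then 1 else 0) + (if x = v then 1 else 0))
          = ∑ x : Fin n, (H1.support.count x + H2.support.count x) := by
      rw [Finset.sum_add_distrib, Finset.sum_add_distrib, Finset.sum_add_distrib,
        aux_sum_count, aux_sum_count,
        Finset.sum_ite_eq' Finset.univ u (fun _ => 1),
        Finset.sum_ite_eq' Finset.univ v (fun _ => 1),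
        SimpleGraph.Walk.length_support, SimpleGraph.Walk.length_support]
      simp [Finset.card_univ]
      omega
    have := (Finset.sum_eq_sum_iff_of_le hlow).mp hsum
    intro x
    exact (this x (Finset.mem_univ x)).symm
  have hOnce : ∀ x : Fin n, x ≠ u → x ≠ v → x ∈ H1.support → x ∈ H2.support → False := by
    intro x hxu hxv hx1 hx2
    have a1 := hcnt _ x hx1
    have a2 := hcnt _ x hx2
    have h := hkey x
    rw [if_neg hxu, if_neg hxv] at h
    omega
  have hu'1 : u' ∈ H1.support := H1.snd_mem_support_of_mem_edges h1
  have hv'2 : v' ∈ H2.support := H2.snd_mem_support_of_mem_edges h2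
  have hu'v' : u' ≠ v' := by
    rintro rfl
    exact hOnce u' (Ne.symm huu') hu'v hu'1 hv'2
  have hnew1 : s(u', v') ∉ H1.edges := by
    intro h
    exact hOnce v' hv'u (Ne.symm hvv') (H1.snd_mem_support_of_mem_edges h) hv'2
  have hnew2 : s(u', v') ∉ H2.edges := by
    intro h
    exact hOnce u' (Ne.symm huu') hu'v hu'1 (H2.fst_mem_support_of_mem_edges h)
  -- decompose H1 and H2
  obtain ⟨hA1, t1, hH1eq⟩ := aux_head H1 hH1 h1
  have h2r : s(v, v') ∈ H2.reverse.edges := by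
    rw [SimpleGraph.Walk.edges_reverse, List.mem_reverse]; exact h2
  obtain ⟨hA2, t2r, hH2req⟩ := aux_head H2.reverse hH2.reverse h2r
  -- facts about t1
  have ht1path : t1.IsPath := by
    rw [hH1eq, SimpleGraph.Walk.cons_isPath_iff] at hH1; exact hH1.1
  have ht2rpath : t2r.IsPath := by
    have := hH2.reverse
    rw [hH2req, SimpleGraph.Walk.cons_isPath_iff] at this; exact this.1
  have hc1 : ∀ x, H1.support.count x = (if x = u then 1 else 0) + t1.support.count x := by
    intro x
    rw [hH1eq, SimpleGraph.Walk.support_cons, List.count_cons]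
    by_cases hxu : x = u <;> simp [hxu] <;> omega
  have hc2 : ∀ x, H2.support.count x = (if x = v then 1 else 0) + t2r.support.count x := by
    intro x
    have h := congrArg (fun (l : SimpleGraph.Walk _ _ _) => l.support.count x) hH2req
    simp only [SimpleGraph.Walk.support_reverse, List.count_reverse,
      SimpleGraph.Walk.support_cons, List.count_cons] at h
    rw [h]
    by_cases hxv : x = v <;> simp [hxv] <;> omega
  have he1 : ∀ e, e ∈ H1.edges ↔ e = s(u, u') ∨ e ∈ t1.edges := by
    intro e
    rw [hH1eq, SimpleGraph.Walk.edges_cons, List.mem_cons]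
  have he2 : ∀ e, e ∈ H2.edges ↔ e = s(v, v') ∨ e ∈ t2r.edges := by
    intro e
    have h := congrArg (fun (l : SimpleGraph.Walk _ _ _) => e ∈ l.edges) hH2req
    simp only [SimpleGraph.Walk.edges_reverse, List.mem_reverse,
      SimpleGraph.Walk.edges_cons, List.mem_cons, eq_iff_iff] at h
    exact h
  have hne11 : s(u, u') ∉ t1.edges := by
    have := hnodup1
    rw [hH1eq, SimpleGraph.Walk.edges_cons] at this
    exact (List.nodup_cons.mp this).1
  have hne22 : s(v, v') ∉ t2r.edges := by
    intro h
    have : s(v, v') ∈ H2.reverse.edges := by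
      rw [hH2req, SimpleGraph.Walk.edges_cons]
      exact List.mem_cons_of_mem _ h
    rw [SimpleGraph.Walk.edges_reverse, List.mem_reverse] at this
    have hnd := hnodup2
    have h' : H2.reverse.edges.Nodup := by
      rw [SimpleGraph.Walk.edges_reverse]; exact List.nodup_reverse.mpr hnd
    rw [hH2req, SimpleGraph.Walk.edges_cons, List.nodup_cons] at h'
    exact h'.1 h
  -- build the new cycle
  have hAvu : (⊤ : SimpleGraph (Fin n)).Adj v u := by simp [Ne.symm huv]
  have hAv'u' : (⊤ : SimpleGraph (Fin n)).Adj v' u' := by simp [Ne.symm hu'v']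
  have ht1sub : ∀ e ∈ t1.edges, e ∈ H1.edges := fun e he => (he1 e).mpr (Or.inr he)
  have ht2sub : ∀ e ∈ t2r.edges, e ∈ H2.edges := fun e he => (he2 e).mpr (Or.inr he)
  have hqel : (SimpleGraph.Walk.cons hAvu
      (t2r.reverse.append (SimpleGraph.Walk.cons hAv'u' t1))).edges
        = s(v, u) :: (t2r.edges.reverse ++ (s(v', u') :: t1.edges)) := by
    simp
  refine ⟨v, SimpleGraph.Walk.cons hAvu (t2r.reverse.append (SimpleGraph.Walk.cons hAv'u' t1)),
    ?_, ?_⟩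
  · rw [SimpleGraph.Walk.isHamiltonianCycle_iff_isCycle_and_support_count_tail_eq_one]
    have hcount : ∀ x : Fin n,
        ((SimpleGraph.Walk.cons hAvu
          (t2r.reverse.append (SimpleGraph.Walk.cons hAv'u' t1))).support.tail.count x) = 1 := by
      intro x
      have h := hkey x
      have e1 := hc1 x
      have e2 := hc2 x
      rw [SimpleGraph.Walk.support_cons, List.tail_cons, SimpleGraph.Walk.support_append,
        SimpleGraph.Walk.support_cons, List.tail_cons, List.count_append,
        SimpleGraph.Walk.support_reverse, List.count_reverse]
      split_ifs at h e1 e2 <;> omega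
    refine ⟨⟨⟨⟨?_⟩, by simp⟩, ?_⟩, hcount⟩
    · rw [hqel]
      refine List.nodup_cons.mpr ⟨?_, ?_⟩
      · intro h
        rw [List.mem_append, List.mem_reverse, List.mem_cons] at h
        rcases h with h | h | h
        · refine hchord ?_
          rw [Sym2.eq_swap]
          exact (hunion _).mpr (Or.inr (ht2sub _ h))
        · rw [Sym2.eq_iff] at h
          rcases h with ⟨ha, hb⟩ | ⟨ha, hb⟩
          · exact hvv' ha
          · exact hu'v ha.symm
        · refine hchord ?_
          rw [Sym2.eq_swap]
          exact (hunion _).mpr (Or.inl (ht1sub _ h))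
      · refine List.Nodup.append (List.nodup_reverse.mpr ht2rpath.isTrail.edges_nodup) ?_ ?_
        · refine List.nodup_cons.mpr ⟨?_, ht1path.isTrail.edges_nodup⟩
          intro h
          refine hnew1 ?_
          rw [Sym2.eq_swap]
          exact ht1sub _ h
        · intro e hea heb
          rw [List.mem_reverse] at hea
          rw [List.mem_cons] at heb
          rcases heb with rfl | heb
          · refine hnew2 ?_
            rw [Sym2.eq_swap]
            exact ht2sub _ hea
          · exact hdisj e (ht1sub _ heb) (ht2sub _ hea)
    · exact List.nodup_iff_count_le_one.mpr fun x => le_of_eq (hcount x)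
  · intro e
    rw [hqel, List.mem_cons, List.mem_append, List.mem_reverse, List.mem_cons]
    constructor
    · rintro (rfl | h | rfl | h)
      · exact Or.inr (Or.inl Sym2.eq_swap)
      · refine Or.inl ⟨(hunion _).mpr (Or.inr (ht2sub _ h)), ?_, ?_⟩
        · rintro rfl
          exact hdisj _ h1 (ht2sub _ h)
        · rintro rfl
          exact hne22 h
      · exact Or.inr (Or.inr Sym2.eq_swap)
      · refine Or.inl ⟨(hunion _).mpr (Or.inl (ht1sub _ h)), ?_, ?_⟩
        · rintro rfl
          exact hne11 h
        · rintro rfl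
          exact hdisj _ (ht1sub _ h) h2
    · rintro (⟨hep, hnea, hneb⟩ | rfl | rfl)
      · rcases (hunion e).mp hep with h | h
        · rcases (he1 e).mp h with rfl | h'
          · exact absurd rfl hnea
          · exact Or.inr (Or.inr (Or.inr h'))
        · rcases (he2 e).mp h with rfl | h'
          · exact absurd rfl hneb
          · exact Or.inr (Or.inl h')
      · exact Or.inl Sym2.eq_swap
      · exact Or.inr (Or.inr (Or.inl Sym2.eq_swap))
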